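/- Let S be a dense subsemigroup of ((0,∞),+) and v ≥ 1. Then 0⁺(Sᵛ) ∩ K(β(Sᵛ_d)) = ∅. -/
import Mathlib


open Filter Set

attribute [local instance] Ultrafilter.add Ultrafilter.addSemigroup

/-- `0⁺(Sᵛ)`: ultrafilters on `Sᵛ` (discrete) containing `((0,ε) ∩ S)ᵛ` for every `ε > 0`. -/
def zeroPlusV (S : AddSubsemigroup ℝ) (v : ℕ) : Set (Ultrafilter (Fin v → S)) :=
  {p | ∀ ε : ℝ, 0 < ε → {f : Fin v → S | ∀ i, 0 < (f i : ℝ) ∧ (f i : ℝ) < ε} ∈ p}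

/-- A (nonempty) two-sided ideal of the semigroup `βγ` of ultrafilters. -/
def IsTwoSidedIdealU (γ : Type*) [AddSemigroup γ] (I : Set (Ultrafilter γ)) : Prop :=
  I.Nonempty ∧ ∀ p ∈ I, ∀ q : Ultrafilter γ, p + q ∈ I ∧ q + p ∈ I

/-- `K(βγ)`, the smallest two-sided ideal of `βγ` (the intersection of all two-sided ideals,
which coincides with the smallest ideal since `βγ` has one). -/
def smallestIdealU (γ : Type*) [AddSemigroup γ] : Set (Ultrafilter γ) :=
  ⋂₀ {I | IsTwoSidedIdealU γ I}

/-- `0⁺(Sᵛ) ∩ K(β(Sᵛ_d)) = ∅`. -/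
theorem zeroPlusV_inter_smallestIdeal_eq_empty (S : AddSubsemigroup ℝ)
    (hpos : ∀ x ∈ S, (0:ℝ) < x)
    (hdense : ∀ a b : ℝ, 0 < a → a < b → ∃ s ∈ S, a < s ∧ s < b)
    (v : ℕ) (hv : 1 ≤ v) :
    zeroPlusV S v ∩ smallestIdealU (Fin v → S) = ∅ := by
  ext p
  simp only [Set.mem_inter_iff, Set.mem_empty_iff_false, iff_false, not_and]
  intro hp hK
  obtain ⟨s₀, hs₀, h1, h2⟩ := hdense 1 2 one_pos one_lt_two
  have hc : (0:ℝ) < s₀ := hpos s₀ hs₀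
  set A : Set (Fin v → S) := {f | ∀ i, s₀ ≤ (f i : ℝ)} with hA
  have hIdeal : IsTwoSidedIdealU (Fin v → S) {q | A ∈ q} := by
    refine ⟨⟨pure (fun _ => ⟨s₀, hs₀⟩), fun i => le_refl s₀⟩, ?_⟩
    intro q hq r
    have hq' : ∀ᶠ x in (q : Filter (Fin v → S)), x ∈ A := hq
    constructor
    · show A ∈ q + r
      have : ∀ᶠ m in ↑(q + r), m ∈ A := by
        rw [Ultrafilter.eventually_add]
        filter_upwards [hq'] with x hx
        filter_upwards with y i
        have hEq : ((x + y) i : ℝ) = (x i : ℝ) + (y i : ℝ) := rfl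
        rw [hEq]
        have := hpos (y i) (y i).2
        linarith [hx i]
      exact this
    · show A ∈ r + q
      have : ∀ᶠ m in ↑(r + q), m ∈ A := by
        rw [Ultrafilter.eventually_add]
        filter_upwards with x
        filter_upwards [hq'] with y hy i
        have hEq : ((x + y) i : ℝ) = (x i : ℝ) + (y i : ℝ) := rfl
        rw [hEq]
        have := hpos (x i) (x i).2
        linarith [hy i]
      exact this
  have hAp : A ∈ p := hK {q | A ∈ q} hIdeal
  have hBp := hp s₀ hc
  obtain ⟨f, hfA, hfB⟩ := Ultrafilter.nonempty_of_mem (inter_mem hAp hBp)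
  have i : Fin v := ⟨0, hv⟩
  exact absurd (hfA i) (not_le.mpr (hfB i).2)
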